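/- Let K be a field, let Γ be a finite directed multigraph with boundary map ∂ : K^E → K^V and cycle space H₁(Γ) = ker ∂, and for each edge e let η_e : H₁(Γ) → K be the restriction of the e-th coordinate functional. Then the number of distinct hyperplanes |A_Γ| = |{ker η_e : e ∈ E, η_e ≠ 0}| equals b₁(Γ) = dim_K H₁(Γ) if and only if H₁(Γ) admits a K-basis C₁,…,C_b whose supports are pairwise disjoint, i.e., for i ≠ j there is no edge e with Cᵢ(e) ≠ 0 and Cⱼ(e) ≠ 0 (a separated basis). -/

import Mathlib

/-- The boundary map `∂ : K^E → K^V` of a directed multigraph, sending the basis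
vector of an edge `e` to `(indicator of t e) - (indicator of s e)`. -/
noncomputable def graphBoundary (K : Type*) [Field K] {V E : Type*} [Fintype E]
    [DecidableEq V] (s t : E → V) : (E → K) →ₗ[K] (V → K) :=
  ∑ e : E, (LinearMap.proj e : (E → K) →ₗ[K] K).smulRight
    (fun v => (if t e = v then (1 : K) else 0) - (if s e = v then 1 else 0))

/-- The restriction to a subspace `W ⊆ K^E` of the `e`-th coordinate functional. -/
noncomputable def coordRestrict {K E : Type*} [Field K] (W : Submodule K (E → K)) (e : E) :
    W →ₗ[K] K := (LinearMap.proj e).comp W.subtype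

open Module LinearMap

section Aux
variable {K W : Type*} [Field K] [AddCommGroup W] [Module K W] [FiniteDimensional K W]

lemma aux_finrank_inf_ker (A : Submodule K W) (f : W →ₗ[K] K) :
    finrank K A ≤ finrank K (A ⊓ LinearMap.ker f : Submodule K W) + 1 := by
  have h1 := Submodule.finrank_sup_add_finrank_inf_eq A (LinearMap.ker f)
  have h2 : finrank K ↥(A ⊔ LinearMap.ker f) ≤ finrank K W := Submodule.finrank_le _
  have h3 := LinearMap.finrank_range_add_finrank_ker f
  have h4 : finrank K ↥(LinearMap.range f) ≤ 1 := by
    simpa using Submodule.finrank_le (LinearMap.range f)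
  omega

lemma aux_inf_card (T : Finset (Submodule K W)) :
    (∀ Y ∈ T, ∃ f : W →ₗ[K] K, Y = LinearMap.ker f) →
    finrank K W ≤ finrank K (T.inf id : Submodule K W) + T.card := by
  classical
  induction T using Finset.induction_on with
  | empty => intro _; rw [Finset.inf_empty]; simp [finrank_top]
  | @insert a T ha IH =>
    intro hT
    obtain ⟨f, hf⟩ := hT a (Finset.mem_insert_self a T)
    have IH' := IH (fun Y hY => hT Y (Finset.mem_insert_of_mem hY))
    have key : finrank K ↥(T.inf _root_.id) ≤ finrank K ↥((insert a T).inf _root_.id) + 1 := by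
      rw [Finset.inf_insert, id_eq, hf, inf_comm]
      exact aux_finrank_inf_ker (T.inf _root_.id) f
    rw [Finset.card_insert_of_notMem ha]
    omega

end Aux

/-- For a finite directed multigraph `Γ`, the number of distinct hyperplanes of the
arrangement `A_Γ` in the cycle space `H₁(Γ) = ker ∂` equals `b₁(Γ) = dim_K H₁(Γ)` if and
only if `H₁(Γ)` admits a basis of cycles whose supports are pairwise disjoint
(a separated basis). -/
theorem cycle_space_arrangement_boolean_iff_separated_basis
    {K : Type*} [Field K] {V E : Type*} [Fintype V] [Fintype E] [DecidableEq V]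
    (s t : E → V)
    (H1 : Submodule K (E → K)) (hH1 : H1 = LinearMap.ker (graphBoundary K s t))
    (η : E → (H1 →ₗ[K] K)) (hη : ∀ e, η e = coordRestrict H1 e) :
    {X : Submodule K H1 | ∃ e, η e ≠ 0 ∧ X = LinearMap.ker (η e)}.ncard
        = Module.finrank K H1 ↔
      ∃ (b : ℕ) (C : Basis (Fin b) K H1),
        ∀ i j, i ≠ j → ∀ e : E, (C i : E → K) e = 0 ∨ (C j : E → K) e = 0 := by
  classical
  clear hH1
  have hcoord : ∀ (e : E) (x : H1), η e x = (x : E → K) e := by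
    intro e x; rw [hη]; rfl
  set S := {X : Submodule K H1 | ∃ e, η e ≠ 0 ∧ X = LinearMap.ker (η e)} with hSdef
  constructor
  · intro hcard
    have hSfin : S.Finite := by
      apply Set.Finite.subset (Set.finite_range (fun e => LinearMap.ker (η e)))
      rintro X ⟨e, _, rfl⟩; exact ⟨e, rfl⟩
    set T : Finset (Submodule K H1) := hSfin.toFinset with hTdef
    have hTcard : T.card = finrank K H1 := by
      rw [← hcard, Set.ncard_eq_toFinset_card S hSfin]
    have hmemS : ∀ Y ∈ T, ∃ e, η e ≠ 0 ∧ Y = LinearMap.ker (η e) := by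
      intro Y hY; exact (hSfin.mem_toFinset.mp hY)
    have hbot : T.inf _root_.id = (⊥ : Submodule K H1) := by
      rw [eq_bot_iff]
      intro x hx
      have hx' : ∀ Y ∈ T, x ∈ Y := Submodule.mem_finsetInf.mp hx
      have hxz : (x : E → K) = 0 := by
        funext e
        by_cases he : η e = 0
        · have h0 : η e x = 0 := by rw [he]; rfl
          rwa [hcoord] at h0
        · have hmem : LinearMap.ker (η e) ∈ T :=
            hSfin.mem_toFinset.mpr ⟨e, he, rfl⟩
          have hxk := hx' _ hmem
          rw [LinearMap.mem_ker, hcoord] at hxk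
          exact hxk
      exact (Submodule.mem_bot K).mpr (Subtype.ext (by simpa using hxz))
    by_cases hTe : T = ∅
    · have h0 : finrank K H1 = 0 := by rw [← hTcard, hTe]; rfl
      refine ⟨0, Module.finBasisOfFinrankEq K H1 h0, ?_⟩
      intro i j hij e
      exact i.elim0
    · have hNX : ∀ X ∈ T, ∃ x : H1, x ∈ (T.erase X).inf _root_.id ∧ x ≠ 0 := by
        intro X hX
        have h1 : finrank K H1 ≤
            finrank K ((T.erase X).inf _root_.id : Submodule K H1) + (T.erase X).card := by
          apply aux_inf_card
          intro Y hY
          obtain ⟨e, _, hYe⟩ := hmemS Y (Finset.mem_of_mem_erase hY)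
          exact ⟨η e, hYe⟩
        have h2 : (T.erase X).card = T.card - 1 := Finset.card_erase_of_mem hX
        have h3 : 1 ≤ T.card := Finset.card_pos.mpr ⟨X, hX⟩
        have h4 : 1 ≤ finrank K ((T.erase X).inf _root_.id : Submodule K H1) := by omega
        have h5 : ((T.erase X).inf _root_.id : Submodule K H1) ≠ ⊥ := by
          intro hb
          rw [hb] at h4
          simp [finrank_bot] at h4
        obtain ⟨x, hxm, hx0⟩ := (Submodule.ne_bot_iff _).mp h5
        exact ⟨x, hxm, hx0⟩
      set C : {X // X ∈ T} → H1 := fun X => (hNX X.1 X.2).choose with hCdef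
      have hCmem : ∀ X : {X // X ∈ T}, ∀ Y ∈ T, Y ≠ X.1 → (C X) ∈ Y := by
        intro X Y hY hne
        have hm := (hNX X.1 X.2).choose_spec.1
        exact Submodule.mem_finsetInf.mp hm Y (Finset.mem_erase.mpr ⟨hne, hY⟩)
      have hC0 : ∀ X, C X ≠ 0 := fun X => (hNX X.1 X.2).choose_spec.2
      have hCnot : ∀ X : {X // X ∈ T}, C X ∉ X.1 := by
        intro X hmem
        have hall : C X ∈ T.inf _root_.id := by
          rw [Submodule.mem_finsetInf]
          intro Y hY
          by_cases h : Y = X.1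
          · rw [id_eq, h]; exact hmem
          · exact hCmem X Y hY h
        rw [hbot] at hall
        exact hC0 X (by simpa using hall)
      have hLI : LinearIndependent K C := by
        rw [Fintype.linearIndependent_iff]
        intro g hg Y
        obtain ⟨e, he, hYe⟩ := hmemS Y.1 Y.2
        have happ : (η e) (∑ X, g X • C X) = 0 := by rw [hg]; exact map_zero _
        rw [map_sum] at happ
        have hterm : ∀ X ∈ Finset.univ, X ≠ Y → (η e) (g X • C X) = 0 := by
          intro X _ hXY
          have hmem : C X ∈ LinearMap.ker (η e) := by
            rw [← hYe]
            exact hCmem X Y.1 Y.2 (fun h => hXY (Subtype.ext h.symm))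
          rw [map_smul, LinearMap.mem_ker.mp hmem, smul_zero]
        rw [Finset.sum_eq_single Y hterm (by simp)] at happ
        rw [map_smul, smul_eq_mul] at happ
        have hCYe : (η e) (C Y) ≠ 0 := by
          intro h0
          exact hCnot Y (by rw [hYe]; exact LinearMap.mem_ker.mpr h0)
        exact (mul_eq_zero.mp happ).resolve_right hCYe
      have hTne : T.Nonempty := Finset.nonempty_iff_ne_empty.mpr hTe
      haveI : Nonempty {X // X ∈ T} := ⟨⟨hTne.choose, hTne.choose_spec⟩⟩
      have hcardT : Fintype.card {X // X ∈ T} = finrank K H1 := by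
        rw [Fintype.card_coe]; exact hTcard
      let B := basisOfLinearIndependentOfCardEqFinrank hLI hcardT
      have hB : ⇑B = C := coe_basisOfLinearIndependentOfCardEqFinrank hLI hcardT
      let eqv := Fintype.equivFinOfCardEq hcardT
      refine ⟨finrank K H1, B.reindex eqv, ?_⟩
      intro i j hij e
      by_contra hcon
      push_neg at hcon
      obtain ⟨hie, hje⟩ := hcon
      rw [Basis.reindex_apply, hB] at hie hje
      set X := eqv.symm i with hXdef
      set Y := eqv.symm j with hYdef
      have hXY : X ≠ Y := eqv.symm.injective.ne hij
      have hee : η e ≠ 0 := by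
        intro h0
        apply hie
        have h1 : η e (C X) = 0 := by rw [h0]; rfl
        rwa [hcoord] at h1
      have hkermem : LinearMap.ker (η e) ∈ T := hSfin.mem_toFinset.mpr ⟨e, hee, rfl⟩
      have hZX : LinearMap.ker (η e) = X.1 := by
        by_contra h
        have hm := hCmem X _ hkermem h
        rw [LinearMap.mem_ker, hcoord] at hm
        exact hie hm
      have hZY : LinearMap.ker (η e) = Y.1 := by
        by_contra h
        have hm := hCmem Y _ hkermem h
        rw [LinearMap.mem_ker, hcoord] at hm
        exact hje hm
      exact hXY (Subtype.ext (hZX ▸ hZY))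
  · rintro ⟨b, C, hsep⟩
    have hker : ∀ (e : E) (i : Fin b), ((C i : H1) : E → K) e ≠ 0 →
        η e ≠ 0 ∧ LinearMap.ker (η e) = LinearMap.ker (C.coord i) := by
      intro e i hie
      have heq : η e = ((C i : H1) : E → K) e • C.coord i := by
        apply C.ext
        intro j
        rw [hcoord]
        by_cases h : j = i
        · subst h
          simp [Basis.coord_apply, Basis.repr_self]
        · have hz : ((C j : H1) : E → K) e = 0 := by
            rcases hsep j i h e with h0 | h0
            · exact h0
            · exact absurd h0 hie
          rw [hz]
          simp [Basis.coord_apply, Basis.repr_self, Finsupp.single_apply, h]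
      constructor
      · intro h0
        apply hie
        have h1 : η e (C i) = 0 := by rw [h0]; rfl
        rwa [hcoord] at h1
      · rw [heq]
        exact LinearMap.ker_smul _ _ hie
    have hginj : Function.Injective (fun i : Fin b => LinearMap.ker (C.coord i)) := by
      intro i j hgij
      by_contra hij
      have h1 : C j ∈ LinearMap.ker (C.coord i) := by
        rw [LinearMap.mem_ker, Basis.coord_apply, Basis.repr_self, Finsupp.single_apply]
        simp [Ne.symm hij]
      have hgij' : LinearMap.ker (C.coord i) = LinearMap.ker (C.coord j) := hgij
      rw [hgij', LinearMap.mem_ker, Basis.coord_apply, Basis.repr_self] at h1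
      simp at h1
    have hSeq : S = Set.range (fun i : Fin b => LinearMap.ker (C.coord i)) := by
      ext X
      constructor
      · rintro ⟨e, he, rfl⟩
        have hex : ∃ i, ((C i : H1) : E → K) e ≠ 0 := by
          by_contra hall
          push_neg at hall
          apply he
          apply C.ext
          intro j
          rw [hcoord]
          simp [hall j]
        obtain ⟨i, hi⟩ := hex
        exact ⟨i, ((hker e i hi).2).symm⟩
      · rintro ⟨i, rfl⟩
        have hCi : (C i : H1) ≠ 0 := C.ne_zero i
        have hex : ∃ e, ((C i : H1) : E → K) e ≠ 0 := by
          by_contra hall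
          push_neg at hall
          exact hCi (Subtype.ext (funext hall))
        obtain ⟨e, he⟩ := hex
        obtain ⟨h1, h2⟩ := hker e i he
        exact ⟨e, h1, h2.symm⟩
    rw [hSeq, ← Nat.card_coe_set_eq, Nat.card_range_of_injective hginj,
      Nat.card_eq_fintype_card, Fintype.card_fin, finrank_eq_card_basis C, Fintype.card_fin]
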